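/- The benchmark exact solution satisfies the generalised tangential interface condition v_ff·τ = ε N_τ^{bl} (τ·T(v_ff,p_ff)n) + ε² M_τ^{1,bl} ∂p_pm/∂x₁ on Γ with boundary layer constants N_τ^{bl} = −1/π and M_τ^{1,bl} = −2k(1 + ε/2)/(πε²): for every k > 0, ε > 0 and every x₁ ∈ ℝ, u_ff(x₁, 1/2) = ε·(−1/π)·(−∂u_ff/∂x₂(x₁, 1/2)) + ε²·(−2k(1+ε/2)/(πε²))·∂p_pm/∂x₁(x₁, 1/2), where u_ff is the first component of v_ff. -/

import Mathlib

open Real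

/-- The benchmark exact solution satisfies the generalised tangential interface
condition on `Γ = (0,1)×{1/2}` with `N_τ^{bl} = −1/π` and
`M_τ^{1,bl} = −2k(1+ε/2)/(πε²)`: for every `k > 0`, `ε > 0` and every `x₁ ∈ ℝ`,
`u_ff(x₁,1/2) = ε·(−1/π)·(−∂u_ff/∂x₂(x₁,1/2)) + ε²·(−2k(1+ε/2)/(πε²))·∂p_pm/∂x₁(x₁,1/2)`. -/
theorem benchmark_tangential_interface_condition (k ε : ℝ) (hk : 0 < k) (hε : 0 < ε)
    (x₁ : ℝ) :
    Real.sin (π * x₁ / 2) * Real.cos (π * (1 / 2 : ℝ) / 2)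
      = ε * (-1 / π)
          * (-(deriv (fun t : ℝ => Real.sin (π * x₁ / 2) * Real.cos (π * t / 2)) (1 / 2)))
        + ε ^ 2 * (-(2 * k * (1 + ε / 2)) / (π * ε ^ 2))
          * deriv
              (fun t : ℝ =>
                Real.sqrt 2 / 2 * Real.cos (π * t / 2) * Real.exp ((1 / 2 : ℝ) - 1 / 2) / k)
              x₁ := by
  have hπ : π ≠ 0 := Real.pi_ne_zero
  have h1 : HasDerivAt (fun t : ℝ => Real.sin (π * x₁ / 2) * Real.cos (π * t / 2))
      (Real.sin (π * x₁ / 2) * (-Real.sin (π * (1/2 : ℝ) / 2) * (π / 2))) (1/2) := by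
    have : HasDerivAt (fun t : ℝ => π * t / 2) (π / 2) (1/2 : ℝ) := by
      simpa using ((hasDerivAt_id (1/2 : ℝ)).const_mul π).div_const 2
    simpa [mul_comm, mul_assoc, mul_left_comm] using ((this.cos).const_mul (Real.sin (π * x₁ / 2)))
  have h2 : HasDerivAt (fun t : ℝ =>
        Real.sqrt 2 / 2 * Real.cos (π * t / 2) * Real.exp ((1 / 2 : ℝ) - 1 / 2) / k)
      (Real.sqrt 2 / 2 * (-Real.sin (π * x₁ / 2) * (π / 2)) * Real.exp ((1 / 2 : ℝ) - 1 / 2) / k)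
      x₁ := by
    have : HasDerivAt (fun t : ℝ => π * t / 2) (π / 2) x₁ := by
      simpa using ((hasDerivAt_id x₁).const_mul π).div_const 2
    simpa [mul_comm, mul_assoc, mul_left_comm] using
      (((this.cos).const_mul (Real.sqrt 2 / 2)).mul_const (Real.exp ((1 / 2 : ℝ) - 1 / 2))).div_const k
  rw [h1.deriv, h2.deriv]
  have h4 : π * (1/2 : ℝ) / 2 = π / 4 := by ring
  rw [h4, Real.sin_pi_div_four, Real.cos_pi_div_four]
  have h2' : Real.sqrt 2 * Real.sqrt 2 = 2 := Real.mul_self_sqrt (by norm_num)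
  field_simp
  ring_nf
  rw [Real.exp_zero]
  ring
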